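/- If the perturbations in the inexact Arnoldi relation satisfy ‖e⁽ᵏ⁾‖ ≤ ε/(m · |eₖᵀ y_m|) whenever eₖᵀ y_m ≠ 0 (for k = 1,…,m), then the gap between the true and computed residual satisfies ‖r_m − r̃_m‖ ≤ ε. -/

import Mathlib

open Matrix

/-- Euclidean norm of a vector in ℝ^N. -/
noncomputable def vecEnorm {N : ℕ} (x : Fin N → ℝ) : ℝ := Real.sqrt (∑ i, x i ^ 2)

/-- If each perturbation satisfies ‖e⁽ᵏ⁾‖ ≤ ε/(m·|eₖᵀy|) whenever eₖᵀy ≠ 0,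
then the residual gap satisfies ‖r_m − r̃_m‖ ≤ ε. -/
theorem inexact_arnoldi_relaxed_gap {N m : ℕ} (ε : ℝ) (hε : 0 ≤ ε)
    (A : Matrix (Fin N) (Fin N) ℝ) (V : Matrix (Fin N) (Fin (m + 1)) ℝ)
    (hV : Vᵀ * V = 1) (E : Matrix (Fin N) (Fin m) ℝ)
    (H : Matrix (Fin (m + 1)) (Fin m) ℝ)
    (hArn : A * V.submatrix id Fin.castSucc - E = V * H)
    (b : Fin N → ℝ) (y : Fin m → ℝ)
    (hE : ∀ k : Fin m, y k ≠ 0 →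
      vecEnorm (fun i => E i k) ≤ ε / (m * |y k|)) :
    vecEnorm ((b + (A * V.submatrix id Fin.castSucc).mulVec y) - (b + (V * H).mulVec y))
      ≤ ε := by
  have hnorm : ∀ x : Fin N → ℝ, vecEnorm x = ‖((WithLp.equiv 2 (Fin N → ℝ)).symm x)‖ := by
    intro x
    rw [EuclideanSpace.norm_eq]
    simp [vecEnorm, Real.norm_eq_abs, sq_abs]
  have hsub : (b + (A * V.submatrix id Fin.castSucc).mulVec y) - (b + (V * H).mulVec y)
      = E.mulVec y := by
    have h := congrArg (fun M : Matrix (Fin N) (Fin m) ℝ => M.mulVec y) hArn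
    simp only [Matrix.sub_mulVec] at h
    funext i
    have h2 := congrFun h i
    simp only [Pi.sub_apply, Pi.add_apply] at h2 ⊢
    linarith
  rw [hsub, hnorm]
  have hdecomp : ((WithLp.equiv 2 (Fin N → ℝ)).symm (E.mulVec y))
      = ∑ k : Fin m, y k • ((WithLp.equiv 2 (Fin N → ℝ)).symm (fun i => E i k)) := by
    have h0 : E.mulVec y = ∑ k : Fin m, y k • (fun i => E i k : Fin N → ℝ) := by
      funext i
      simp [Matrix.mulVec, dotProduct, Finset.sum_apply, mul_comm]
    rw [h0]
    ext i
    simp [Finset.sum_apply]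
  rw [hdecomp]
  have step : ∀ k : Fin m, ‖y k • ((WithLp.equiv 2 (Fin N → ℝ)).symm (fun i => E i k))‖ ≤ ε / m := by
    intro k
    rw [norm_smul, Real.norm_eq_abs]
    by_cases hy : y k = 0
    · simp [hy]
      positivity
    · have hb := hE k hy
      rw [hnorm] at hb
      have hyk : 0 < |y k| := abs_pos.mpr hy
      calc |y k| * ‖((WithLp.equiv 2 (Fin N → ℝ)).symm (fun i => E i k))‖
          ≤ |y k| * (ε / (m * |y k|)) := mul_le_mul_of_nonneg_left hb (abs_nonneg _)
        _ = ε / m := by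
            rw [mul_comm (↑m : ℝ) (|y k|), ← mul_div_assoc, mul_comm (|y k|) ε,
              mul_comm (|y k|) (↑m : ℝ), mul_div_mul_right _ _ hyk.ne']
  calc ‖∑ k : Fin m, y k • ((WithLp.equiv 2 (Fin N → ℝ)).symm (fun i => E i k))‖
      ≤ ∑ k : Fin m, ‖y k • ((WithLp.equiv 2 (Fin N → ℝ)).symm (fun i => E i k))‖ := norm_sum_le _ _
    _ ≤ ∑ _k : Fin m, ε / m := Finset.sum_le_sum fun k _ => step k
    _ = m * (ε / m) := by simp [Finset.sum_const, Finset.card_fin, nsmul_eq_mul]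
    _ ≤ ε := by
        rcases Nat.eq_zero_or_pos m with hm | hm
        · subst hm; simpa using hε
        · have : (m : ℝ) ≠ 0 := by positivity
          rw [mul_div_cancel₀ _ this]
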